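/- The map sending a constant symmetric bilinear form L̂ on ℝ^{n+1} to its restriction L to the tangent spaces of the unit sphere S^n together with the 1-form λ_x(v) = −L̂(v,x) is injective; in particular the space of special conformal Killing tensors on S^n arising this way is isomorphic, as a vector space, to the symmetric square S²ℝ^{n+1}, of dimension (n+1)(n+2)/2. -/

import Mathlib

open scoped RealInnerProductSpace BigOperators

/-- The map sending a constant symmetric bilinear form `L̂` on `ℝ^{n+1}`
to the pair `(L, λ)` of its restriction `L` to the tangent spaces of the unit sphere
`Sⁿ` and the 1-form `λ_x(v) = −L̂(v,x)` is injective: if both vanish identically on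
the sphere, then `L̂ = 0`.  In particular the space of special conformal Killing
tensors on `Sⁿ` arising this way is isomorphic, as a vector space, to the symmetric
square `S²ℝ^{n+1}`. -/
theorem restriction_injective
    {n : ℕ} (hn : 1 ≤ n)
    (Lhat : EuclideanSpace ℝ (Fin (n+1)) →ₗ[ℝ] EuclideanSpace ℝ (Fin (n+1)) →ₗ[ℝ] ℝ)
    (hsym : ∀ a b, Lhat a b = Lhat b a)
    (hL : ∀ x : EuclideanSpace ℝ (Fin (n+1)), ⟪x, x⟫ = 1 →
      ∀ v w : EuclideanSpace ℝ (Fin (n+1)), ⟪v, x⟫ = 0 → ⟪w, x⟫ = 0 → Lhat v w = 0)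
    (hlam : ∀ x : EuclideanSpace ℝ (Fin (n+1)), ⟪x, x⟫ = 1 →
      ∀ v : EuclideanSpace ℝ (Fin (n+1)), ⟪v, x⟫ = 0 → - Lhat v x = 0) :
    Lhat = 0 := by
  -- Key algebraic lemma: for orthonormal `x, y` both `Lhat x y` and `Lhat x x` vanish.
  have key : ∀ x y : EuclideanSpace ℝ (Fin (n+1)), ⟪x, x⟫ = 1 → ⟪y, y⟫ = 1 →
      ⟪x, y⟫ = 0 → Lhat x y = 0 ∧ Lhat x x = 0 := by
    intro x y hx hy hxy
    have hyx : ⟪y, x⟫ = (0:ℝ) := by rw [real_inner_comm]; exact hxy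
    have hXY : Lhat x y = 0 := by
      have h := hlam x hx y hyx
      have : Lhat y x = 0 := by linarith
      rw [hsym]; exact this
    have hYX : Lhat y x = 0 := by rw [hsym]; exact hXY
    set s : ℝ := (Real.sqrt 2)⁻¹ with hsdef
    have hs2 : (0:ℝ) < Real.sqrt 2 := Real.sqrt_pos.mpr (by norm_num)
    have hsne : s ≠ 0 := inv_ne_zero (ne_of_gt hs2)
    have hssq : s * s = 1/2 := by
      rw [hsdef, ← mul_inv]
      rw [← Real.sqrt_mul_self (by norm_num : (0:ℝ) ≤ 2)]
      norm_num
    have hzz : ⟪s • (x + y), s • (x + y)⟫ = (1:ℝ) := by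
      rw [real_inner_smul_left, real_inner_smul_right]
      rw [inner_add_add_self, hx, hy, hxy, hyx]
      rw [← mul_assoc, hssq]; ring
    have htan : ⟪x - y, s • (x + y)⟫ = (0:ℝ) := by
      rw [real_inner_smul_right, inner_sub_left, inner_add_right, inner_add_right]
      rw [hx, hy, hxy, hyx]; ring
    have h2 : Lhat (x - y) (x - y) = 0 := hL _ hzz _ _ htan htan
    have h3 : Lhat (x - y) (x + y) = 0 := by
      have h := hlam _ hzz (x - y) htan
      have h' : Lhat (x - y) (s • (x + y)) = 0 := by linarith
      rw [map_smul, smul_eq_mul] at h'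
      exact (mul_eq_zero.mp h').resolve_left hsne
    have e2 : Lhat x x - Lhat x y - Lhat y x + Lhat y y = 0 := by
      have := h2
      simp only [map_sub, LinearMap.sub_apply] at this
      linarith
    have e3 : Lhat x x + Lhat x y - Lhat y x - Lhat y y = 0 := by
      have := h3
      simp only [map_sub, map_add, LinearMap.sub_apply, LinearMap.add_apply] at this
      linarith
    exact ⟨hXY, by linarith⟩
  -- Reduce to the standard orthonormal basis.
  have hb : ∀ i j : Fin (n+1), Lhat (EuclideanSpace.single i 1) (EuclideanSpace.single j 1) = 0 := by
    have hunit : ∀ i : Fin (n+1),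
        ⟪(EuclideanSpace.single i (1:ℝ)), EuclideanSpace.single i 1⟫ = (1:ℝ) := by
      intro i; simp [EuclideanSpace.inner_single_left]
    have horth : ∀ i j : Fin (n+1), i ≠ j →
        ⟪(EuclideanSpace.single i (1:ℝ)), EuclideanSpace.single j 1⟫ = (0:ℝ) := by
      intro i j hij
      have : j ≠ i := Ne.symm hij
      simp [EuclideanSpace.inner_single_left, EuclideanSpace.single_apply, this]
    intro i j
    by_cases hij : i = j
    · subst hij
      obtain ⟨k, hk⟩ : ∃ k : Fin (n+1), k ≠ i := by
        refine ⟨if i = 0 then ⟨1, by omega⟩ else 0, ?_⟩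
        split <;> rename_i h
        · subst h; intro hc; exact absurd (congrArg Fin.val hc) (by simp)
        · intro hc; exact h hc.symm
      exact (key _ (EuclideanSpace.single k 1) (hunit i) (hunit k)
        (horth i k (Ne.symm hk))).2
    · exact (key _ _ (hunit i) (hunit j) (horth i j hij)).1
  -- Conclude by bilinearity.
  have hbasis := (EuclideanSpace.basisFun (Fin (n+1)) ℝ).toBasis
  apply (EuclideanSpace.basisFun (Fin (n+1)) ℝ).toBasis.ext
  intro i
  apply (EuclideanSpace.basisFun (Fin (n+1)) ℝ).toBasis.ext
  intro j
  simp [EuclideanSpace.basisFun, OrthonormalBasis.coe_toBasis]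
  exact hb i j
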